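/- In a phylogenetic network, the sets of leaves below the highest cut-arcs partition the leaf set. -/

import Mathlib

namespace Phylo

variable {V : Type*}

/-- In-degree of a vertex in a directed graph given by relation `R`. -/
noncomputable def inDeg (R : V → V → Prop) (v : V) : ℕ := {u | R u v}.ncard

/-- Out-degree of a vertex. -/
noncomputable def outDeg (R : V → V → Prop) (v : V) : ℕ := {w | R v w}.ncard

/-- A phylogenetic network: an acyclic digraph with a unique root of indegree 0 and
outdegree 2, in which every vertex is the root, a split vertex (indeg 1, outdeg 2),
a recombination vertex (indeg 2, outdeg 1) or a leaf (indeg 1, outdeg 0). -/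
def IsPhyloNet (R : V → V → Prop) : Prop :=
  (∀ v, ¬ Relation.TransGen R v v) ∧
  (∃! r, inDeg R r = 0) ∧
  (∀ v : V, (inDeg R v = 0 ∧ outDeg R v = 2) ∨ (inDeg R v = 1 ∧ outDeg R v = 2) ∨
    (inDeg R v = 2 ∧ outDeg R v = 1) ∨ (inDeg R v = 1 ∧ outDeg R v = 0))

/-- A leaf is a vertex of outdegree 0. -/
def IsLf (R : V → V → Prop) (v : V) : Prop := outDeg R v = 0

/-- The set of leaves of a network. -/
def netLeaves (R : V → V → Prop) : Set V := {v | IsLf R v}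

/-- `p` is a directed path (as a nonempty list of vertices) from `a` to `b`. -/
def IsPth (R : V → V → Prop) (p : List V) (a b : V) : Prop :=
  p ≠ [] ∧ p.head? = some a ∧ p.getLast? = some b ∧ p.Chain' R

/-- Internal vertices of a path. -/
def interior (p : List V) : List V := p.tail.dropLast

/-- Two paths are internally vertex-disjoint. -/
def IntDisj (p q : List V) : Prop :=
  (∀ v ∈ interior p, v ∉ q) ∧ (∀ v ∈ interior q, v ∉ p)

/-- The triplet xy|z is consistent with the network `R`: there are `u ≠ v` and pairwise
internally vertex-disjoint paths `u→x`, `u→y`, `v→u`, `v→z`. -/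
def ConsistentTrip (R : V → V → Prop) (x y z : V) : Prop :=
  ∃ u v : V, ∃ p1 p2 p3 p4 : List V, u ≠ v ∧
    IsPth R p1 u x ∧ IsPth R p2 u y ∧ IsPth R p3 v u ∧ IsPth R p4 v z ∧
    IntDisj p1 p2 ∧ IntDisj p1 p3 ∧ IntDisj p1 p4 ∧
    IntDisj p2 p3 ∧ IntDisj p2 p4 ∧ IntDisj p3 p4

/-- `(x,y,z) ∈ T` codes the rooted triplet xy|z; `trip T x y z` says xy|z ∈ T
(taking into account the symmetry xy|z = yx|z). -/
def trip (T : Set (V × V × V)) (x y z : V) : Prop := (x, y, z) ∈ T ∨ (y, x, z) ∈ T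

/-- The leaf set L(T) of a triplet set. -/
def tripLeaves (T : Set (V × V × V)) : Set V :=
  {a | ∃ t ∈ T, a = t.1 ∨ a = t.2.1 ∨ a = t.2.2}

/-- `T` is dense: every 3-element subset of L(T) supports at least one triplet of `T`. -/
def DenseT (T : Set (V × V × V)) : Prop :=
  ∀ x y z, x ∈ tripLeaves T → y ∈ tripLeaves T → z ∈ tripLeaves T →
    x ≠ y → x ≠ z → y ≠ z → trip T x y z ∨ trip T x z y ∨ trip T y z x

/-- An SN-set of `T`: a subset of L(T) closed under the operation
`S_T(X) = X ∪ {c | ∃ x y ∈ X, xc|y ∈ T}`. -/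
def IsSNSet (T : Set (V × V × V)) (Y : Set V) : Prop :=
  Y ⊆ tripLeaves T ∧
    ∀ ⦃c x y : V⦄, x ∈ Y → y ∈ Y → c ∈ tripLeaves T → trip T x c y → c ∈ Y

/-- `SN T X`: the closure of `X` under `S_T`, i.e. the smallest SN-superset of `X`. -/
def SN (T : Set (V × V × V)) (X : Set V) : Set V := ⋂₀ {Y | X ⊆ Y ∧ IsSNSet T Y}

/-- A maximal SN-set: a proper SN-set such that the only SN-set strictly containing
it is L(T) itself. -/
def MaxSN (T : Set (V × V × V)) (S : Set V) : Prop :=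
  IsSNSet T S ∧ S ≠ tripLeaves T ∧ ∀ Y, IsSNSet T Y → S ⊂ Y → Y = tripLeaves T

/-- A network is consistent with a triplet set if it is consistent with every triplet. -/
def ConsistentSet (R : V → V → Prop) (T : Set (V × V × V)) : Prop :=
  ∀ t ∈ T, ConsistentTrip R t.1 t.2.1 t.2.2

/-- A cut-arc: an arc whose removal disconnects the underlying undirected graph. -/
def CutArc (R : V → V → Prop) (u v : V) : Prop :=
  R u v ∧ ∃ a b : V, ¬ Relation.ReflTransGen
    (fun p q => (R p q ∨ R q p) ∧ ¬((p = u ∧ q = v) ∨ (p = v ∧ q = u))) a b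

/-- The set of leaves below the arc `(u,v)`: leaves reachable from `v`. -/
def leavesBelow (R : V → V → Prop) (u v : V) : Set V :=
  {ℓ | IsLf R ℓ ∧ Relation.ReflTransGen R v ℓ}

/-- A highest cut-arc: a cut-arc `(u,v)` such that there is no cut-arc `(u',v')`
with `u` reachable from `v'`. -/
def HighestCutArc (R : V → V → Prop) (u v : V) : Prop :=
  CutArc R u v ∧ ∀ u' v', CutArc R u' v' → ¬ Relation.ReflTransGen R v' u

/-- The subset `S` is connected in the underlying undirected graph. -/
def ConnOn (R : V → V → Prop) (S : Set V) : Prop :=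
  ∀ a ∈ S, ∀ b ∈ S,
    Relation.ReflTransGen (fun p q => p ∈ S ∧ q ∈ S ∧ (R p q ∨ R q p)) a b

/-- `S` induces a biconnected subgraph containing at least one arc. -/
def BiconnSet (R : V → V → Prop) (S : Set V) : Prop :=
  (∃ a ∈ S, ∃ b ∈ S, R a b) ∧ ConnOn R S ∧ ∀ w ∈ S, ConnOn R (S \ {w})

/-- A biconnected component: a maximal biconnected vertex set. -/
def IsBCC (R : V → V → Prop) (S : Set V) : Prop :=
  BiconnSet R S ∧ ∀ S', BiconnSet R S' → S ⊆ S' → S' = S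

/-- A level-k network: every biconnected component has at most `k` recombination
vertices. -/
def LevelK (k : ℕ) (R : V → V → Prop) : Prop :=
  ∀ S, IsBCC R S → ({v ∈ S | inDeg R v = 2}).ncard ≤ k

/-- A valid (non-redundant) network: every nontrivial biconnected component has at
least three outgoing arcs. -/
def GoodNet (R : V → V → Prop) : Prop :=
  IsPhyloNet R ∧ ∀ S, IsBCC R S → 3 ≤ S.ncard →
    3 ≤ {p : V × V | R p.1 p.2 ∧ p.1 ∈ S ∧ p.2 ∉ S}.ncard

end Phylo

section Aux

open Phylo Relation

variable {V : Type*} [Fintype V] {R : V → V → Prop}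

private lemma wfTrans (hA : ∀ v, ¬ Relation.TransGen R v v) :
    WellFounded (Relation.TransGen R) := by
  haveI : IsTrans V (Relation.TransGen R) := ⟨fun _ _ _ => Relation.TransGen.trans⟩
  haveI : IsIrrefl V (Relation.TransGen R) := ⟨hA⟩
  exact Finite.wellFounded_of_trans_of_irrefl _

private lemma acyc_notboth (hA : ∀ v, ¬ Relation.TransGen R v v) {u v : V}
    (h1 : R u v) (h2 : Relation.ReflTransGen R v u) : False :=
  hA u (Relation.TransGen.head' h1 h2)

/-- A directed path from `a` to `x` either avoids the arc `(u,v)` or visits `u`. -/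
private lemma lemD (u v : V) {a x : V} (h : Relation.ReflTransGen R a x) :
    Relation.ReflTransGen
      (fun p q => (R p q ∨ R q p) ∧ ¬((p = u ∧ q = v) ∨ (p = v ∧ q = u))) a x
      ∨ Relation.ReflTransGen R a u := by
  induction h with
  | refl => exact Or.inl .refl
  | @tail p x' hap hpx ih =>
    by_cases hc : (p = u ∧ x' = v) ∨ (p = v ∧ x' = u)
    · rcases hc with ⟨hp, _⟩ | ⟨_, hx⟩
      · exact Or.inr (hp ▸ hap)
      · exact Or.inr (hap.tail (hx ▸ hpx))
    · rcases ih with hE | hR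
      · exact Or.inl (hE.tail ⟨Or.inl hpx, hc⟩)
      · exact Or.inr hR

/-- A directed path from `a` to `x` either avoids the arc `(u,v)` or `x` is
reachable from `v`. -/
private lemma lemD' (u v : V) {a x : V} (h : Relation.ReflTransGen R a x) :
    Relation.ReflTransGen
      (fun p q => (R p q ∨ R q p) ∧ ¬((p = u ∧ q = v) ∨ (p = v ∧ q = u))) a x
      ∨ Relation.ReflTransGen R v x := by
  induction h with
  | refl => exact Or.inl .refl
  | @tail p x' hap hpx ih =>
    rcases ih with hE | hR
    · by_cases hc : (p = u ∧ x' = v) ∨ (p = v ∧ x' = u)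
      · rcases hc with ⟨_, hx⟩ | ⟨hp, _⟩
        · exact Or.inr (hx ▸ Relation.ReflTransGen.refl)
        · exact Or.inr (Relation.ReflTransGen.single (hp ▸ hpx))
      · exact Or.inl (hE.tail ⟨Or.inl hpx, hc⟩)
    · exact Or.inr (hR.tail hpx)

private lemma exists_pred (hnet : IsPhyloNet R) {x : V} (hx : inDeg R x ≠ 0) :
    ∃ u, R u x :=
  Set.nonempty_of_ncard_ne_zero hx

private lemma root_reach (hnet : IsPhyloNet R) {r : V} (hr : inDeg R r = 0)
    (hru : ∀ y, inDeg R y = 0 → y = r) : ∀ x, Relation.ReflTransGen R r x := by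
  intro x
  induction x using (wfTrans hnet.1).induction with
  | _ x ih =>
    by_cases h0 : inDeg R x = 0
    · rw [hru x h0]
    · obtain ⟨u, hu⟩ := exists_pred hnet h0
      exact (ih u (Relation.TransGen.single hu)).tail hu

private lemma cut_not_conn (hnet : IsPhyloNet R) {u v : V} (hc : CutArc R u v) :
    ¬ Relation.ReflTransGen
      (fun p q => (R p q ∨ R q p) ∧ ¬((p = u ∧ q = v) ∨ (p = v ∧ q = u))) u v := by
  obtain ⟨huv, a, b, hab⟩ := hc
  intro hconn
  apply hab
  obtain ⟨r, hr, hru⟩ := hnet.2.1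
  have reachAll := root_reach hnet hr hru
  set E1 := fun p q => (R p q ∨ R q p) ∧ ¬((p = u ∧ q = v) ∨ (p = v ∧ q = u)) with hE1
  have hsymm : Symmetric E1 := by
    rintro p q ⟨h, hn⟩
    exact ⟨h.symm, by tauto⟩
  have hrEu : Relation.ReflTransGen E1 r u := by
    rcases lemD' u v (reachAll u) with h | h
    · exact h
    · exact absurd h (fun h => acyc_notboth hnet.1 huv h)
  have key : ∀ x, Relation.ReflTransGen E1 r x := by
    intro x
    rcases lemD' u v (reachAll x) with h | h
    · exact h
    · rcases lemD u v h with h2 | h2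
      · exact (hrEu.trans hconn).trans h2
      · exact absurd h2 (fun h2 => acyc_notboth hnet.1 huv h2)
  haveI : Std.Symm E1 := ⟨fun _ _ h => hsymm h⟩
  exact ((Relation.ReflTransGen.symmetric (r := E1)).symm _ _ (key a)).trans (key b)

end Aux


open Phylo in
/-- In a phylogenetic network, the sets of leaves below the highest
cut-arcs partition the leaf set: every leaf lies below exactly one highest cut-arc. -/
theorem stmt4 {V : Type*} [Fintype V] (R : V → V → Prop) (hnet : IsPhyloNet R) :
    ∀ ℓ : V, IsLf R ℓ →
      ∃! p : V × V, HighestCutArc R p.1 p.2 ∧ ℓ ∈ leavesBelow R p.1 p.2 := by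
  intro ℓ hℓ
  have hA := hnet.1
  have hout : outDeg R ℓ = 0 := hℓ
  have hin : inDeg R ℓ = 1 := by
    rcases hnet.2.2 ℓ with ⟨h1, h2⟩ | ⟨h1, h2⟩ | ⟨h1, h2⟩ | ⟨h1, h2⟩ <;> omega
  obtain ⟨u, hu⟩ : ∃ a, {x | R x ℓ} = {a} := Set.ncard_eq_one.mp hin
  have hRu : R u ℓ := by
    have : u ∈ {x | R x ℓ} := by rw [hu]; rfl
    exact this
  have hempty : {w | R ℓ w} = ∅ := (Set.ncard_eq_zero (Set.toFinite _)).mp hout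
  have hca : CutArc R u ℓ := by
    refine ⟨hRu, ℓ, u, fun h => ?_⟩
    have hlu : ℓ = u := by
      rcases Relation.ReflTransGen.cases_head h with heq | ⟨c, ⟨hor, hn⟩, _⟩
      · exact heq
      · exfalso
        rcases hor with h1 | h1
        · have : c ∈ {w | R ℓ w} := h1
          rw [hempty] at this
          exact this
        · have : c = u := by
            have : c ∈ {x | R x ℓ} := h1
            rw [hu] at this; exact this
          exact hn (Or.inr ⟨rfl, this⟩)
    exact hA ℓ (Relation.TransGen.single (hlu ▸ hRu))
  -- existence of a highest cut-arc above ℓ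
  set A : Set V := {w | ∃ z, CutArc R w z ∧ Relation.ReflTransGen R z ℓ} with hAdef
  have hA0 : u ∈ A := ⟨ℓ, hca, Relation.ReflTransGen.refl⟩
  obtain ⟨u0, hu0, hmin⟩ := (wfTrans hA).has_min A ⟨u, hA0⟩
  obtain ⟨v0, hcv0, hreach⟩ := hu0
  have hhigh : HighestCutArc R u0 v0 := by
    refine ⟨hcv0, fun u' v' hc' hreach' => ?_⟩
    have hmem : u' ∈ A :=
      ⟨v', hc', hreach'.trans ((Relation.ReflTransGen.single hcv0.1).trans hreach)⟩
    exact hmin u' hmem (Relation.TransGen.head' hc'.1 hreach')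
  -- uniqueness
  have uniq : ∀ u1 v1 u2 v2, HighestCutArc R u1 v1 → Relation.ReflTransGen R v1 ℓ →
      HighestCutArc R u2 v2 → Relation.ReflTransGen R v2 ℓ → (u1, v1) = (u2, v2) := by
    intro u1 v1 u2 v2 h1 hb1 h2 hb2
    by_contra hne
    obtain ⟨r, hr, hru⟩ := hnet.2.1
    have reachAll := root_reach hnet hr hru
    set E1 := fun p q => (R p q ∨ R q p) ∧ ¬((p = u1 ∧ q = v1) ∨ (p = v1 ∧ q = u1))
      with hE1
    have hnc : ¬ Relation.ReflTransGen E1 u1 v1 := cut_not_conn hnet h1.1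
    have hsymm : Symmetric E1 := by
      rintro p q ⟨h, hn⟩
      exact ⟨h.symm, by tauto⟩
    have c1 : Relation.ReflTransGen E1 r u1 := by
      rcases lemD' u1 v1 (reachAll u1) with h | h
      · exact h
      · exact absurd h (fun h => acyc_notboth hA h1.1.1 h)
    have c2 : Relation.ReflTransGen E1 r u2 := by
      rcases lemD' u1 v1 (reachAll u2) with h | h
      · exact h
      · exact absurd h (h2.2 u1 v1 h1.1)
    have c3 : Relation.ReflTransGen E1 v2 ℓ := by
      rcases lemD u1 v1 hb2 with h | h
      · exact h
      · exact absurd h (h1.2 u2 v2 h2.1)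
    have c4 : Relation.ReflTransGen E1 v1 ℓ := by
      rcases lemD u1 v1 hb1 with h | h
      · exact h
      · exact absurd h (fun h => acyc_notboth hA h1.1.1 h)
    have c5 : E1 u2 v2 := by
      refine ⟨Or.inl h2.1.1, ?_⟩
      rintro (⟨hq1, hq2⟩ | ⟨hq1, hq2⟩)
      · exact hne (by rw [hq1, hq2])
      · exact acyc_notboth hA h1.1.1 (Relation.ReflTransGen.single (by rw [← hq1, ← hq2]; exact h2.1.1))
    haveI : Std.Symm E1 := ⟨fun _ _ h => hsymm h⟩
    exact hnc (((((Relation.ReflTransGen.symmetric (r := E1)).symm _ _ c1).trans c2).trans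
      ((Relation.ReflTransGen.single c5).trans c3)).trans
      ((Relation.ReflTransGen.symmetric (r := E1)).symm _ _ c4))
  refine ⟨(u0, v0), ⟨hhigh, hℓ, hreach⟩, ?_⟩
  rintro ⟨a, b⟩ ⟨hh, hm⟩
  have := uniq a b u0 v0 hh hm.2 hhigh hreach
  simpa using this
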